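/- Let X be a subset of a real normed vector space, let f : X → ℝ attain a minimum at x* ∈ X, let λ > 0, L ≥ 0, B ≥ 0, let (x_k)_{k≥0} be a sequence in X with f(x_{k+1}) ≤ f(x_k) for all k ≥ 0 and with x_k → x* in norm, and let (z_k)_{k≥0} be nonnegative reals with |z_k − z_0| ≤ B for all k ≥ 0. Suppose that with step sizes α_k = 1/(λ(k+2)) the fundamental inequality α_k (f(x_k) − f(x)) ≤ (1 − λ α_k) ‖x_k − x‖² − ‖x_{k+1} − x‖² + λ α_k (z_k − z_{k+1}) + α_k² L²/2 holds for every k ≥ 0 and every x ∈ X, and that f(x_k) → f(x*). Then quadratic growth holds at the initial point: λ ‖x* − x_0‖² ≤ f(x_0) − f(x*). -/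

import Mathlib

open Filter Topology

/-- Mirror-descent fundamental inequality implies quadratic growth at the initial point. -/
theorem mirror_descent_quadratic_growth {E : Type*} [NormedAddCommGroup E] [NormedSpace ℝ E]
    (X : Set E) (f : E → ℝ) (xstar : E) (hxstar : xstar ∈ X)
    (hmin : ∀ y ∈ X, f xstar ≤ f y)
    (lam L B : ℝ) (hlam : 0 < lam) (hL : 0 ≤ L) (hB : 0 ≤ B)
    (x : ℕ → E) (hxX : ∀ k, x k ∈ X)
    (hmono : ∀ k, f (x (k + 1)) ≤ f (x k))
    (hconv : Tendsto x atTop (𝓝 xstar))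
    (z : ℕ → ℝ) (hz : ∀ k, 0 ≤ z k) (hzB : ∀ k, |z k - z 0| ≤ B)
    (α : ℕ → ℝ) (hα : ∀ k, α k = 1 / (lam * ((k : ℝ) + 2)))
    (hfund : ∀ k, ∀ y ∈ X,
      α k * (f (x k) - f y) ≤
        (1 - lam * α k) * ‖x k - y‖ ^ 2 - ‖x (k + 1) - y‖ ^ 2
          + lam * α k * (z k - z (k + 1)) + α k ^ 2 * L ^ 2 / 2)
    (hfconv : Tendsto (fun k => f (x k)) atTop (𝓝 (f xstar))) :
    lam * ‖xstar - x 0‖ ^ 2 ≤ f (x 0) - f xstar := by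
  have hlam' : lam ≠ 0 := ne_of_gt hlam
  set c : ℝ := (f (x 0) - f xstar) / lam with hc_def
  set D : ℝ := L ^ 2 / (2 * lam ^ 2) with hD_def
  have hc0 : 0 ≤ c := div_nonneg (by linarith [hmin (x 0) (hxX 0)]) hlam.le
  have hD0 : 0 ≤ D := by positivity
  have hclam : c * lam = f (x 0) - f xstar := by
    rw [hc_def]; exact div_mul_cancel₀ _ hlam'
  -- step inequality
  have step : ∀ k : ℕ, ((k : ℝ) + 2) * ‖x (k + 1) - x 0‖ ^ 2 ≤
      ((k : ℝ) + 1) * ‖x k - x 0‖ ^ 2 + c + (z k - z (k + 1)) + D / ((k : ℝ) + 2) := by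
    intro k
    have h := hfund k (x 0) (hxX 0)
    have hf := hmin (x k) (hxX k)
    rw [hα] at h
    have ht : (0 : ℝ) < (k : ℝ) + 2 := by positivity
    have ht' : ((k : ℝ) + 2) ≠ 0 := ne_of_gt ht
    have hmul := mul_le_mul_of_nonneg_left h
      (show (0:ℝ) ≤ 2 * (lam * ((k : ℝ) + 2)) ^ 2 by positivity)
    have key : 2 * lam * ((k : ℝ) + 2) * (f (x k) - f (x 0)) ≤
        2 * lam ^ 2 * ((k : ℝ) + 2) * (((k : ℝ) + 1) * ‖x k - x 0‖ ^ 2)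
          - 2 * lam ^ 2 * ((k : ℝ) + 2) * (((k : ℝ) + 2) * ‖x (k + 1) - x 0‖ ^ 2)
          + 2 * lam ^ 2 * ((k : ℝ) + 2) * (z k - z (k + 1)) + L ^ 2 := by
      calc 2 * lam * ((k : ℝ) + 2) * (f (x k) - f (x 0))
          = 2 * (lam * ((k : ℝ) + 2)) ^ 2 *
              (1 / (lam * ((k : ℝ) + 2)) * (f (x k) - f (x 0))) := by
            field_simp
        _ ≤ 2 * (lam * ((k : ℝ) + 2)) ^ 2 *
              ((1 - lam * (1 / (lam * ((k : ℝ) + 2)))) * ‖x k - x 0‖ ^ 2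
                - ‖x (k + 1) - x 0‖ ^ 2
                + lam * (1 / (lam * ((k : ℝ) + 2))) * (z k - z (k + 1))
                + (1 / (lam * ((k : ℝ) + 2))) ^ 2 * L ^ 2 / 2) := hmul
        _ = 2 * lam ^ 2 * ((k : ℝ) + 2) * (((k : ℝ) + 1) * ‖x k - x 0‖ ^ 2)
              - 2 * lam ^ 2 * ((k : ℝ) + 2) * (((k : ℝ) + 2) * ‖x (k + 1) - x 0‖ ^ 2)
              + 2 * lam ^ 2 * ((k : ℝ) + 2) * (z k - z (k + 1)) + L ^ 2 := by
            field_simp; ring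
    have key2 : 2 * lam * ((k : ℝ) + 2) * (f xstar - f (x 0)) ≤
        2 * lam * ((k : ℝ) + 2) * (f (x k) - f (x 0)) := by
      have hpos : (0:ℝ) ≤ 2 * lam * ((k : ℝ) + 2) := by positivity
      exact mul_le_mul_of_nonneg_left (by linarith) hpos
    have hpos2 : (0:ℝ) < 2 * lam ^ 2 * ((k : ℝ) + 2) := by positivity
    rw [← mul_le_mul_iff_right₀ hpos2]
    have expand : 2 * lam ^ 2 * ((k : ℝ) + 2) *
        (((k : ℝ) + 1) * ‖x k - x 0‖ ^ 2 + c + (z k - z (k + 1)) + D / ((k : ℝ) + 2)) =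
        2 * lam ^ 2 * ((k : ℝ) + 2) * (((k : ℝ) + 1) * ‖x k - x 0‖ ^ 2)
          + 2 * lam * ((k : ℝ) + 2) * (f (x 0) - f xstar)
          + 2 * lam ^ 2 * ((k : ℝ) + 2) * (z k - z (k + 1)) + L ^ 2 := by
      rw [hc_def, hD_def]; field_simp
    rw [expand]
    linarith [key, key2]
  -- harmonic-log bound
  have hlog : ∀ n : ℕ, 1 / ((n : ℝ) + 2) ≤ Real.log ((n : ℝ) + 2) - Real.log ((n : ℝ) + 1) := by
    intro n
    have h1 : (0 : ℝ) < (n : ℝ) + 1 := by positivity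
    have h2 : (0 : ℝ) < (n : ℝ) + 2 := by positivity
    have h3 := Real.log_le_sub_one_of_pos (show (0:ℝ) < ((n : ℝ) + 1) / ((n : ℝ) + 2) by positivity)
    rw [Real.log_div (ne_of_gt h1) (ne_of_gt h2)] at h3
    have heq : ((n : ℝ) + 1) / ((n : ℝ) + 2) - 1 = -(1 / ((n : ℝ) + 2)) := by
      field_simp; norm_num
    rw [heq] at h3
    linarith
  -- telescoped bound
  have hsum : ∀ n : ℕ, ((n : ℝ) + 1) * ‖x n - x 0‖ ^ 2 ≤
      (n : ℝ) * c + (z 0 - z n) + D * Real.log ((n : ℝ) + 1) := by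
    intro n
    induction n with
    | zero => simp
    | succ n ih =>
      have hs := step n
      have hl := hlog n
      have hl' : D / ((n : ℝ) + 2) ≤ D * (Real.log ((n : ℝ) + 2) - Real.log ((n : ℝ) + 1)) := by
        rw [div_eq_mul_one_div]
        exact mul_le_mul_of_nonneg_left hl hD0
      push_cast
      have hcast : ((n : ℝ) + 1 + 1) = (n : ℝ) + 2 := by ring
      rw [hcast]
      linarith [hs, hl', ih]
  -- division bound
  have hbound : ∀ n : ℕ, ‖x n - x 0‖ ^ 2 ≤
      ((n : ℝ) * c + B + D * Real.log ((n : ℝ) + 1)) / ((n : ℝ) + 1) := by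
    intro n
    have hn1 : (0 : ℝ) < (n : ℝ) + 1 := by positivity
    have hzb : z 0 - z n ≤ B := by
      have h1 := hzB n
      have h2 := neg_abs_le (z n - z 0)
      linarith
    rw [le_div_iff₀ hn1]
    nlinarith [hsum n]
  -- limits
  have hlogdiv : Tendsto (fun n : ℕ => Real.log ((n : ℝ) + 1) / ((n : ℝ) + 1)) atTop (𝓝 0) := by
    have h1 : Tendsto (fun n : ℕ => (n : ℝ) + 1) atTop atTop :=
      tendsto_atTop_add_const_right atTop 1 tendsto_natCast_atTop_atTop
    exact (Real.isLittleO_log_id_atTop.tendsto_div_nhds_zero).comp h1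
  have hinv : Tendsto (fun n : ℕ => 1 / ((n : ℝ) + 1)) atTop (𝓝 0) :=
    tendsto_one_div_add_atTop_nhds_zero_nat
  have hg : Tendsto (fun n : ℕ => ((n : ℝ) * c + B + D * Real.log ((n : ℝ) + 1)) / ((n : ℝ) + 1))
      atTop (𝓝 c) := by
    have heq : (fun n : ℕ => ((n : ℝ) * c + B + D * Real.log ((n : ℝ) + 1)) / ((n : ℝ) + 1)) =
        fun n : ℕ => c + (B - c) * (1 / ((n : ℝ) + 1))
          + D * (Real.log ((n : ℝ) + 1) / ((n : ℝ) + 1)) := by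
      funext n
      have hn1 : ((n : ℝ) + 1) ≠ 0 := by positivity
      field_simp
      ring
    rw [heq]
    have hlim : Tendsto (fun n : ℕ => c + (B - c) * (1 / ((n : ℝ) + 1))
        + D * (Real.log ((n : ℝ) + 1) / ((n : ℝ) + 1))) atTop (𝓝 (c + (B - c) * 0 + D * 0)) :=
      (tendsto_const_nhds.add (hinv.const_mul (B - c))).add (hlogdiv.const_mul D)
    have h0 : c + (B - c) * 0 + D * 0 = c := by ring
    rw [h0] at hlim
    exact hlim
  have hR : Tendsto (fun n : ℕ => ‖x n - x 0‖ ^ 2) atTop (𝓝 (‖xstar - x 0‖ ^ 2)) :=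
    ((hconv.sub_const (x 0)).norm.pow 2)
  have hfin : ‖xstar - x 0‖ ^ 2 ≤ c := le_of_tendsto_of_tendsto' hR hg hbound
  calc lam * ‖xstar - x 0‖ ^ 2 ≤ lam * c := mul_le_mul_of_nonneg_left hfin hlam.le
    _ = f (x 0) - f xstar := by rw [mul_comm]; exact hclam
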